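/- For an odd prime p, the sum over k from 1 to p-1 of ((1+μ^k)(1+μ^{-k}))/((1-μ^k)(1-μ^{-k})), where μ = exp(2πi/p), equals (p-1)(p-2)/3. -/

import Mathlib

open Finset Polynomial

noncomputable def mu (p : ℕ) : ℂ := Complex.exp (2 * Real.pi * Complex.I / p)

noncomputable def Ipq (p : ℕ) (q : ℤ) : ℂ :=
  ∑ k ∈ Finset.Icc 1 (p - 1),
    ((1 + mu p ^ (k : ℤ)) * (1 + mu p ^ (q * k))) /
      ((1 - mu p ^ (k : ℤ)) * (1 - mu p ^ (q * k)))

lemma sum_c1 (n : ℕ) : ∑ j ∈ Finset.range n, (j : ℂ) = n * (n - 1) / 2 := by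
  induction n with
  | zero => simp
  | succ n ih => rw [Finset.sum_range_succ, ih]; push_cast; ring

lemma sum_c2 (n : ℕ) :
    ∑ j ∈ Finset.range n, (j : ℂ) * ((j : ℂ) - 1) = n * (n - 1) * (n - 2) / 3 := by
  induction n with
  | zero => simp
  | succ n ih => rw [Finset.sum_range_succ, ih]; push_cast; ring

lemma summand_eq (z : ℂ) (h0 : z ≠ 0) (h1 : 1 - z ≠ 0) (h2 : 1 - z⁻¹ ≠ 0) :
    ((1 + z) * (1 + z⁻¹)) / ((1 - z) * (1 - z⁻¹)) = -4 * ((1 - z)⁻¹) ^ 2 + 4 * (1 - z)⁻¹ - 1 := by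
  rw [div_eq_iff (mul_ne_zero h1 h2)]
  field_simp
  ring

lemma polyDerivProd (s : Finset ℕ) (f : ℕ → ℂ[X]) :
    derivative (∏ b ∈ s, f b) = ∑ b ∈ s, (∏ a ∈ s.erase b, f a) * derivative (f b) := by
  classical
  induction s using Finset.induction_on with
  | empty => simp
  | insert b t hb ih =>
    rw [Finset.prod_insert hb, derivative_mul, ih, Finset.sum_insert hb,
      Finset.erase_insert hb, Finset.mul_sum]
    congr 1
    · ring
    · refine Finset.sum_congr rfl fun a ha => ?_
      rw [Finset.erase_insert_of_ne (by rintro rfl; exact hb ha),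
        Finset.prod_insert (fun h => hb (Finset.mem_of_mem_erase h))]
      ring

theorem stmt_0 (p : ℕ) (hp : p.Prime) (hodd : Odd p) :
    ∑ k ∈ Finset.Icc 1 (p - 1),
      ((1 + mu p ^ (k : ℤ)) * (1 + mu p ^ (-(k : ℤ)))) /
        ((1 - mu p ^ (k : ℤ)) * (1 - mu p ^ (-(k : ℤ)))) =
      ((p : ℂ) - 1) * ((p : ℂ) - 2) / 3 := by
  have hp2 : 2 ≤ p := hp.two_le
  have hpn0 : (p : ℕ) ≠ 0 := by omega
  have hpC : (p : ℂ) ≠ 0 := Nat.cast_ne_zero.mpr hpn0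
  set μ : ℂ := mu p with hmu
  have hμ : IsPrimitiveRoot μ p := Complex.isPrimitiveRoot_exp p hpn0
  have hμ0 : μ ≠ 0 := hμ.ne_zero hpn0
  set s : Finset ℕ := Finset.Icc 1 (p - 1) with hs
  have hmem : ∀ k ∈ s, 1 ≤ k ∧ k ≤ p - 1 := fun k hk => Finset.mem_Icc.mp hk
  have hne1 : ∀ k ∈ s, μ ^ k ≠ 1 := by
    intro k hk
    obtain ⟨h1, h2⟩ := hmem k hk
    exact hμ.pow_ne_one_of_pos_of_lt (by omega) (by omega)
  have hw : ∀ k ∈ s, (1 : ℂ) - μ ^ k ≠ 0 := fun k hk =>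
    sub_ne_zero.mpr (fun h => hne1 k hk h.symm)
  have hrange : Finset.range p = insert 0 s := by
    ext x; simp only [Finset.mem_range, Finset.mem_insert, hs, Finset.mem_Icc]; omega
  have h0s : 0 ∉ s := by simp [hs]
  -- polynomial identity
  have hQ : ∏ k ∈ s, (X - C (μ ^ k)) = ∑ j ∈ Finset.range p, (X : ℂ[X]) ^ j := by
    have h1 : (X : ℂ[X]) ^ p - C 1 = ∏ i ∈ Finset.range p, (X - C (μ ^ i * 1)) :=
      X_pow_sub_C_eq_prod hμ (by omega) (one_pow p)
    simp only [mul_one, map_one] at h1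
    rw [hrange, Finset.prod_insert h0s, pow_zero, map_one] at h1
    have h2 : (∑ j ∈ Finset.range p, (X : ℂ[X]) ^ j) * (X - 1) = X ^ p - 1 :=
      geom_sum_mul X p
    have h3 : (X : ℂ[X]) - 1 ≠ 0 := by
      intro h
      have := congrArg (eval 0) h
      simp at this
    apply mul_right_cancel₀ h3
    rw [h2, h1]; ring
  have hQ1 : ∏ k ∈ s, ((1 : ℂ) - μ ^ k) = p := by
    have h := congrArg (eval 1) hQ
    simpa [eval_prod, eval_finset_sum] using h
  have key1 : ∀ k ∈ s, ∏ m ∈ s.erase k, ((1 : ℂ) - μ ^ m) = p * ((1 : ℂ) - μ ^ k)⁻¹ := by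
    intro k hk
    have h := Finset.mul_prod_erase s (fun m => (1 : ℂ) - μ ^ m) hk
    rw [hQ1] at h
    field_simp [hw k hk]
    linear_combination h
  have hD1 : ∑ k ∈ s, ∏ m ∈ s.erase k, ((1 : ℂ) - μ ^ m) = ∑ j ∈ Finset.range p, (j : ℂ) := by
    have h := congrArg (fun q => eval 1 (derivative q)) hQ
    simp only [polyDerivProd, derivative_sum, derivative_X_pow, derivative_X_sub_C,
      mul_one] at h
    simpa [eval_finset_sum, eval_prod] using h
  have hS1 : ∑ k ∈ s, ((1 : ℂ) - μ ^ k)⁻¹ = ((p : ℂ) - 1) / 2 := by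
    rw [Finset.sum_congr rfl key1, ← Finset.mul_sum, sum_c1] at hD1
    apply mul_left_cancel₀ hpC
    rw [hD1]; ring
  have key2 : ∀ k ∈ s, ∀ a ∈ s.erase k,
      ∏ m ∈ (s.erase k).erase a, ((1 : ℂ) - μ ^ m)
        = (p : ℂ) * ((1 : ℂ) - μ ^ k)⁻¹ * ((1 : ℂ) - μ ^ a)⁻¹ := by
    intro k hk a ha
    have has : a ∈ s := Finset.mem_of_mem_erase ha
    have h := Finset.mul_prod_erase (s.erase k) (fun m => (1 : ℂ) - μ ^ m) ha
    rw [key1 k hk] at h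
    field_simp [hw a has, hw k hk] at h ⊢
    linear_combination h
  have hD2 : ∑ k ∈ s, ∑ a ∈ s.erase k, ∏ m ∈ (s.erase k).erase a, ((1 : ℂ) - μ ^ m)
      = ∑ j ∈ Finset.range p, (j : ℂ) * (((j - 1 : ℕ)) : ℂ) := by
    have h := congrArg (fun q => eval 1 (derivative (derivative q))) hQ
    simp only [polyDerivProd, derivative_sum, derivative_X_pow, derivative_X_sub_C, mul_one,
      derivative_mul, derivative_C, zero_mul, add_zero, zero_add] at h
    simpa [eval_finset_sum, eval_prod] using h
  have hcast : ∀ j : ℕ, (j : ℂ) * (((j - 1 : ℕ)) : ℂ) = (j : ℂ) * ((j : ℂ) - 1) := by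
    intro j
    cases j with
    | zero => simp
    | succ n => push_cast [Nat.succ_sub_one]; ring
  have hS2 : ∑ k ∈ s, (((1 : ℂ) - μ ^ k)⁻¹) ^ 2
      = (((p : ℂ) - 1) / 2) ^ 2 - ((p : ℂ) - 1) * ((p : ℂ) - 2) / 3 := by
    have h := hD2
    rw [Finset.sum_congr rfl (fun k hk => Finset.sum_congr rfl (key2 k hk))] at h
    have h2 : ∀ k ∈ s, ∑ a ∈ s.erase k, (p : ℂ) * ((1 : ℂ) - μ ^ k)⁻¹ * ((1 : ℂ) - μ ^ a)⁻¹
        = ((p : ℂ) * (((p : ℂ) - 1) / 2)) * ((1 : ℂ) - μ ^ k)⁻¹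
          - (p : ℂ) * (((1 : ℂ) - μ ^ k)⁻¹) ^ 2 := by
      intro k hk
      rw [Finset.sum_erase_eq_sub hk, ← Finset.mul_sum, hS1]; ring
    rw [Finset.sum_congr rfl h2, Finset.sum_sub_distrib, ← Finset.mul_sum, hS1,
      ← Finset.mul_sum, Finset.sum_congr rfl (fun j _ => hcast j), sum_c2] at h
    apply mul_left_cancel₀ hpC
    linear_combination -h
  have hsummand : ∀ k ∈ s,
      ((1 + mu p ^ (k : ℤ)) * (1 + mu p ^ (-(k : ℤ)))) /
          ((1 - mu p ^ (k : ℤ)) * (1 - mu p ^ (-(k : ℤ))))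
        = -4 * (((1 : ℂ) - μ ^ k)⁻¹) ^ 2 + 4 * ((1 : ℂ) - μ ^ k)⁻¹ - 1 := by
    intro k hk
    have hz0 : μ ^ k ≠ 0 := pow_ne_zero _ hμ0
    have hz1 := hw k hk
    have hzne : μ ^ k ≠ 1 := hne1 k hk
    rw [zpow_neg, zpow_natCast]
    have h2 : (1 : ℂ) - (μ ^ k)⁻¹ ≠ 0 := by
      rw [sub_ne_zero]
      intro h
      exact hzne (inv_eq_one.mp h.symm)
    exact summand_eq _ hz0 hz1 h2
  rw [Finset.sum_congr rfl hsummand]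
  rw [Finset.sum_sub_distrib, Finset.sum_add_distrib, ← Finset.mul_sum, ← Finset.mul_sum,
    hS1, hS2, Finset.sum_const, Nat.card_Icc]
  have hcard : (((p - 1 + 1 - 1 : ℕ)) : ℂ) = (p : ℂ) - 1 := by
    have : p - 1 + 1 - 1 = p - 1 := by omega
    rw [this, Nat.cast_sub (by omega), Nat.cast_one]
  rw [nsmul_eq_mul, hcard]
  ring
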